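/- Let k ≥ 2 and let a₁,…,a_k be positive integers with gcd(a₁,…,a_k) = 1 and a₁ = min(a₁,…,a_k), and let p be a nonnegative integer. Then a₁ times the p-genus n_p(a₁,…,a_k) equals (Σ_{j=0}^{a₁−1} m_j^{(p)}) − a₁·(a₁−1)/2, where m_j^{(p)} is the least element of S_p(a₁,…,a_k) congruent to j modulo a₁ (with m_0^{(0)} = 0). -/

import Mathlib

/-- The denumerant `d(n; a 0, …, a (k-1))`: the number of tuples `x` of nonnegative
integers with `x 0 * a 0 + ⋯ + x (k-1) * a (k-1) = n`. -/
noncomputable def denum (k : ℕ) (a : ℕ → ℕ) (n : ℕ) : ℕ :=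
  Nat.card {x : Fin k → ℕ // ∑ i : Fin k, x i * a i.1 = n}

lemma sol_finite {k : ℕ} {a : ℕ → ℕ} (hapos : ∀ i < k, 0 < a i) (n : ℕ) :
    Finite {x : Fin k → ℕ // ∑ i : Fin k, x i * a i.1 = n} := by
  have hb : ∀ (x : {x : Fin k → ℕ // ∑ i : Fin k, x i * a i.1 = n}) (i : Fin k),
      x.1 i < n + 1 := by
    intro x i
    have h1 : x.1 i ≤ x.1 i * a i.1 :=
      Nat.le_mul_of_pos_right _ (hapos i.1 i.2)
    have h2 : x.1 i * a i.1 ≤ ∑ j : Fin k, x.1 j * a j.1 :=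
      Finset.single_le_sum (f := fun j : Fin k => x.1 j * a j.1)
        (fun j _ => Nat.zero_le _) (Finset.mem_univ i)
    rw [x.2] at h2
    omega
  refine Finite.of_injective (fun x => (fun i => (⟨x.1 i, hb x i⟩ : Fin (n+1)))) ?_
  intro x y hxy
  ext i
  exact congrArg Fin.val (congrFun hxy i)

lemma denum_le_add {k : ℕ} (hk : 2 ≤ k) {a : ℕ → ℕ} (hapos : ∀ i < k, 0 < a i) (n : ℕ) :
    denum k a n ≤ denum k a (n + a 0) := by
  have : Finite {x : Fin k → ℕ // ∑ i : Fin k, x i * a i.1 = n + a 0} := sol_finite hapos _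
  set i0 : Fin k := ⟨0, by omega⟩ with hi0
  have hupd : ∀ (x : Fin k → ℕ) (v : ℕ),
      ∑ i : Fin k, Function.update x i0 v i * a i.1
        = ∑ i : Fin k, Function.update (fun i : Fin k => x i * a i.1) i0 (v * a 0) i := by
    intro x v
    refine Finset.sum_congr rfl fun i _ => ?_
    by_cases h : i = i0
    · subst h; simp [Function.update, hi0]
    · simp [Function.update, h]
  have hsum : ∀ (x : Fin k → ℕ) (v : ℕ),
      ∑ i : Fin k, Function.update x i0 v i * a i.1
        = v * a 0 + ∑ i ∈ Finset.univ \ {i0}, x i * a i.1 := by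
    intro x v
    rw [hupd, Finset.sum_update_of_mem (Finset.mem_univ i0)]
  have hdec : ∀ (x : Fin k → ℕ),
      ∑ i : Fin k, x i * a i.1 = x i0 * a 0 + ∑ i ∈ Finset.univ \ {i0}, x i * a i.1 := by
    intro x
    have := hsum x (x i0)
    rw [Function.update_eq_self] at this
    exact this
  refine Nat.card_le_card_of_injective
    (fun x => ⟨Function.update x.1 i0 (x.1 i0 + 1), ?_⟩) ?_
  · rw [hsum]
    have h1 := hdec x.1
    rw [x.2] at h1
    have h2 : (x.1 i0 + 1) * a 0 = x.1 i0 * a 0 + a 0 := by ring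
    omega
  · intro x y hxy
    have h := congrArg Subtype.val hxy
    simp only at h
    ext i
    by_cases hi : i = i0
    · subst hi
      have := congrFun h i0
      simpa [Function.update] using this
    · have := congrFun h i
      simpa [Function.update, hi] using this

lemma denum_le_add_mul {k : ℕ} (hk : 2 ≤ k) {a : ℕ → ℕ} (hapos : ∀ i < k, 0 < a i)
    (n t : ℕ) : denum k a n ≤ denum k a (n + a 0 * t) := by
  induction t with
  | zero => simp
  | succ t ih =>
      have := denum_le_add hk hapos (n + a 0 * t)
      calc denum k a n ≤ denum k a (n + a 0 * t) := ih
        _ ≤ denum k a (n + a 0 * t + a 0) := this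
        _ = denum k a (n + a 0 * (t + 1)) := by ring_nf

/-- Lemma 1 (formula (2)): the least generator times the `p`-genus (the cardinality of
the set of natural numbers whose denumerant is at most `p`) equals the sum of the
`p`-Apéry set elements minus `a₁(a₁-1)/2`. -/
theorem pGenus_eq_sum_apery (k : ℕ) (hk : 2 ≤ k) (a : ℕ → ℕ)
    (hapos : ∀ i < k, 0 < a i)
    (hgcd : (Finset.range k).gcd a = 1)
    (hmin : ∀ i < k, a 0 ≤ a i)
    (p : ℕ) (m : ℕ → ℕ)
    (hm : ∀ j < a 0, IsLeast {n : ℕ | p < denum k a n ∧ n % a 0 = j} (m j)) :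
    (a 0 : ℤ) * ({n : ℕ | denum k a n ≤ p}.ncard : ℤ)
      = (∑ j ∈ Finset.range (a 0), (m j : ℤ))
        - (a 0 : ℤ) * ((a 0 : ℤ) - 1) / 2 := by
  set A := a 0 with hA
  have hApos : 0 < A := hapos 0 (by omega)
  have hmod : ∀ j < A, m j % A = j := fun j hj => (hm j hj).1.2
  have hmem : ∀ j < A, p < denum k a (m j) := fun j hj => (hm j hj).1.1
  -- characterization
  have hchar : ∀ n : ℕ, denum k a n ≤ p ↔ n < m (n % A) := by
    intro n
    have hj : n % A < A := Nat.mod_lt _ hApos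
    constructor
    · intro h
      by_contra hge
      push_neg at hge
      -- n = m (n % A) + A * t
      have hd : A ∣ n - m (n % A) := by
        exact (Nat.modEq_iff_dvd' hge).mp (hmod _ hj)
      obtain ⟨t, ht⟩ := hd
      have hn : n = m (n % A) + A * t := by omega
      have := denum_le_add_mul hk hapos (m (n % A)) t
      have := hmem _ hj
      rw [← hn] at *
      omega
    · intro h
      by_contra hc
      push_neg at hc
      have := (hm _ hj).2 ⟨hc, rfl⟩
      omega
  -- bound
  set N := (∑ j ∈ Finset.range A, m j) + A with hN
  have hmN : ∀ j < A, m j < N := by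
    intro j hj
    have : m j ≤ ∑ j ∈ Finset.range A, m j :=
      Finset.single_le_sum (fun _ _ => Nat.zero_le _) (Finset.mem_range.mpr hj)
    omega
  set T : Finset ℕ := (Finset.range N).filter (fun n => n < m (n % A)) with hT
  have hset : {n : ℕ | denum k a n ≤ p} = ↑T := by
    ext n
    have hj : n % A < A := Nat.mod_lt _ hApos
    simp only [Set.mem_setOf_eq, hT, Finset.coe_filter, Finset.mem_range, Set.mem_setOf_eq,
      hchar n]
    constructor
    · intro h
      exact ⟨lt_of_lt_of_le h (le_of_lt (hmN _ hj)), h⟩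
    · exact fun h => h.2
  rw [hset, Set.ncard_coe_finset]
  -- count fibers
  have hcard : T.card = ∑ j ∈ Finset.range A, m j / A := by
    rw [Finset.card_eq_sum_card_fiberwise
      (f := fun n => n % A) (t := Finset.range A)
      (fun x _ => Finset.mem_range.mpr (Nat.mod_lt _ hApos))]
    refine Finset.sum_congr rfl fun j hj => ?_
    rw [Finset.mem_range] at hj
    have hfib : (T.filter fun n => n % A = j)
        = (Finset.range (m j / A)).image (fun t => A * t + j) := by
      ext n
      simp only [hT, Finset.mem_filter, Finset.mem_range, Finset.mem_image]
      constructor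
      · rintro ⟨⟨hnN, hnm⟩, hnj⟩
        refine ⟨n / A, ?_, ?_⟩
        · have e1 := Nat.div_add_mod n A
          have e2 := Nat.div_add_mod (m j) A
          have e3 := hmod j hj
          rw [hnj] at hnm
          have : A * (n / A) < A * (m j / A) := by omega
          exact Nat.lt_of_mul_lt_mul_left this
        · have e1 := Nat.div_add_mod n A
          omega
      · rintro ⟨t, ht, rfl⟩
        have e2 := Nat.div_add_mod (m j) A
        have e3 := hmod j hj
        have hmul : A * t + A ≤ A * (m j / A) := by
          have h5 : A * (t + 1) ≤ A * (m j / A) := Nat.mul_le_mul_left A ht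
          have h6 : A * (t + 1) = A * t + A := by ring
          omega
        have hlt : A * t + j < m j := by omega
        have hmodn : (A * t + j) % A = j := by
          rw [Nat.mul_add_mod, Nat.mod_eq_of_lt hj]
        refine ⟨⟨?_, ?_⟩, hmodn⟩
        · exact lt_trans hlt (hmN j hj)
        · rw [hmodn]; exact hlt
    rw [hfib, Finset.card_image_of_injective _ (fun s t hst => by
      have : A * s = A * t := by omega
      exact Nat.eq_of_mul_eq_mul_left hApos this), Finset.card_range]
  rw [hcard]
  -- final arithmetic
  have hterm : ∀ j ∈ Finset.range A, (A : ℤ) * ((m j / A : ℕ) : ℤ) = (m j : ℤ) - j := by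
    intro j hj
    rw [Finset.mem_range] at hj
    have e2 := Nat.div_add_mod (m j) A
    have e3 := hmod j hj
    have h4 : A * (m j / A) + j = m j := by omega
    have h5 := congrArg (Nat.cast : ℕ → ℤ) h4
    rw [Nat.cast_add, Nat.cast_mul] at h5
    linarith
  have hgauss : (∑ j ∈ Finset.range A, (j : ℤ)) * 2 = (A : ℤ) * ((A : ℤ) - 1) := by
    have := Finset.sum_range_id_mul_two A
    have := congrArg (Nat.cast : ℕ → ℤ) this
    push_cast [Nat.cast_sub (by omega : 1 ≤ A)] at this
    linarith
  have hdiv : (A : ℤ) * ((A : ℤ) - 1) / 2 = ∑ j ∈ Finset.range A, (j : ℤ) := by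
    rw [← hgauss]
    exact Int.mul_ediv_cancel _ (by norm_num)
  rw [Nat.cast_sum, Finset.mul_sum, Finset.sum_congr rfl hterm,
    Finset.sum_sub_distrib, hdiv]
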